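/- Let H be a real Hilbert space, r > 0, x̄ ∈ H with ‖x̄‖ = r, and y ∈ H \ {0}. Then 0 ∈ D̂*P_{rB}(x̄)(y) if and only if y = (⟨y, x̄⟩/‖x̄‖²) x̄ with ⟨y, x̄⟩ ≤ 0. -/

import Mathlib

open RealInnerProductSpace Filter Metric

/-- `P` is the metric projection (nearest-point map) onto `C`. -/
def IsMetricProj {H : Type*} [NormedAddCommGroup H] [InnerProductSpace ℝ H]
    (C : Set H) (P : H → H) : Prop :=
  ∀ x : H, P x ∈ C ∧ ∀ w ∈ C, ‖x - P x‖ ≤ ‖x - w‖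

/-- The set `D̂*f(xb)(y)` characterized by the limsup inequality. -/
def coderivSet {H : Type*} [NormedAddCommGroup H] [InnerProductSpace ℝ H]
    (f : H → H) (xb y : H) : Set H :=
  {z | ∀ ε > (0:ℝ), ∃ δ > (0:ℝ), ∀ u : H, u ≠ xb → ‖u - xb‖ < δ →
    (⟪z, u - xb⟫ - ⟪y, f u - f xb⟫) / ‖u - xb‖ < ε}

/-- The (Fréchet) regular normal cone via the limsup inequality. -/
def regNormalCone {E : Type*} [NormedAddCommGroup E] [InnerProductSpace ℝ E]
    (Ω : Set E) (w : E) : Set E :=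
  {v | ∀ ε > (0:ℝ), ∃ δ > (0:ℝ), ∀ u ∈ Ω, u ≠ w → ‖u - w‖ < δ →
    ⟪v, u - w⟫ / ‖u - w‖ < ε}

/-- The Bouligand (contingent) tangent cone. -/
def bouligandTangentCone {E : Type*} [NormedAddCommGroup E] [NormedSpace ℝ E]
    (Ω : Set E) (w : E) : Set E :=
  {z | ∃ t : ℕ → ℝ, ∃ s : ℕ → E, (∀ n, 0 < t n) ∧
    Tendsto t atTop (nhds 0) ∧ Tendsto s atTop (nhds z) ∧ ∀ n, w + t n • s n ∈ Ω}

variable {H : Type*} [NormedAddCommGroup H] [InnerProductSpace ℝ H] [CompleteSpace H]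

theorem stmt11 (r : ℝ) (hr : 0 < r) (xb : H) (hx : ‖xb‖ = r) (P : H → H)
    (hP : IsMetricProj (closedBall (0:H) r) P) (y : H) (hy : y ≠ 0) :
    (0:H) ∈ coderivSet P xb y ↔
      y = (⟪y, xb⟫ / ‖xb‖ ^ 2) • xb ∧ ⟪y, xb⟫ ≤ 0 := by

  have hxb0 : xb ≠ 0 := by
    intro h; rw [h, norm_zero] at hx; linarith
  have hxbsq : ⟪xb, xb⟫ = r ^ 2 := by
    rw [real_inner_self_eq_norm_sq, hx]
  have hPmem : ∀ u : H, u ∈ closedBall (0:H) r → P u = u := by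
    intro u hu
    have h2 := (hP u).2 u hu
    simp only [sub_self, norm_zero] at h2
    have : ‖u - P u‖ = 0 := le_antisymm h2 (norm_nonneg _)
    have := norm_sub_eq_zero_iff.mp this
    exact this.symm
  have hPxb : P xb = xb := hPmem xb (by simp [hx, le_refl])
  constructor
  · intro h
    have claimA : ∀ v : H, ⟪v, xb⟫ < 0 → 0 ≤ ⟪y, v⟫ := by
      intro v hv
      have hv0 : v ≠ 0 := by
        rintro rfl; simp at hv
      have hvn : (0:ℝ) < ‖v‖ := norm_pos_iff.mpr hv0
      by_contra hneg
      push_neg at hneg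
      set ε := -⟪y, v⟫ / ‖v‖ with hεdef
      have hεpos : 0 < ε := div_pos (by linarith) hvn
      obtain ⟨δ, hδpos, hδ⟩ := h ε hεpos
      set t := min (δ / (2 * ‖v‖)) (-(2 * ⟪v, xb⟫) / ‖v‖ ^ 2) with htdef
      have ht1 : 0 < δ / (2 * ‖v‖) := by positivity
      have ht2 : 0 < -(2 * ⟪v, xb⟫) / ‖v‖ ^ 2 := by
        apply div_pos (by linarith) (by positivity)
      have htpos : 0 < t := lt_min ht1 ht2
      set u := xb + t • v with hudef
      have huxb : u - xb = t • v := by simp [hudef]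
      have hune : u ≠ xb := by
        intro hh
        have : t • v = 0 := by rw [← huxb, hh, sub_self]
        rcases smul_eq_zero.mp this with h' | h'
        · exact absurd h' (ne_of_gt htpos)
        · exact hv0 h'
      have hnorm : ‖u - xb‖ = t * ‖v‖ := by
        rw [huxb, norm_smul, Real.norm_eq_abs, abs_of_pos htpos]
      have hlt : ‖u - xb‖ < δ := by
        have : t ≤ δ / (2 * ‖v‖) := min_le_left _ _
        have : t * ‖v‖ ≤ δ / 2 := by
          calc t * ‖v‖ ≤ (δ / (2 * ‖v‖)) * ‖v‖ := by
                exact mul_le_mul_of_nonneg_right this (le_of_lt hvn)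
            _ = δ / 2 := by field_simp
        rw [hnorm]; linarith
      have humem : u ∈ closedBall (0:H) r := by
        rw [mem_closedBall, dist_zero_right]
        have hexp : ‖u‖ ^ 2 = r ^ 2 + 2 * t * ⟪xb, v⟫ + t ^ 2 * ‖v‖ ^ 2 := by
          rw [hudef, norm_add_sq_real, hx, norm_smul, real_inner_smul_right,
            Real.norm_eq_abs, abs_of_pos htpos]
          ring
        have htle : t ≤ -(2 * ⟪v, xb⟫) / ‖v‖ ^ 2 := min_le_right _ _
        have hts : t * ‖v‖ ^ 2 ≤ -(2 * ⟪v, xb⟫) :=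
          (le_div_iff₀ (by positivity : (0:ℝ) < ‖v‖ ^ 2)).mp htle
        have hsq : ‖u‖ ^ 2 ≤ r ^ 2 := by
          have hcomm : ⟪xb, v⟫ = ⟪v, xb⟫ := real_inner_comm v xb
          nlinarith [htpos, sq_nonneg t]
        nlinarith [norm_nonneg u, hsq, hr, sq_nonneg (‖u‖ - r), sq_nonneg (‖u‖ + r)]
      have hPu : P u = u := hPmem u humem
      have := hδ u hune hlt
      rw [hPu, hPxb, hnorm, huxb, inner_zero_left, real_inner_smul_right] at this
      have hval : (0 - t * ⟪y, v⟫) / (t * ‖v‖) = ε := by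
        rw [hεdef]
        field_simp
        ring
      rw [hval] at this
      exact lt_irrefl _ this
    have hyxble : ⟪y, xb⟫ ≤ 0 := by
      have := claimA (-xb) (by rw [inner_neg_left, hxbsq]; nlinarith)
      rw [inner_neg_right] at this
      linarith
    refine ⟨?_, hyxble⟩
    set l := ⟪y, xb⟫ / ‖xb‖ ^ 2 with hl
    set yp := y - l • xb with hyp
    have hnx : (‖xb‖:ℝ) ^ 2 ≠ 0 := pow_ne_zero 2 (norm_ne_zero_iff.mpr hxb0)
    have hypxb : ⟪yp, xb⟫ = 0 := by
      rw [hyp, inner_sub_left, real_inner_smul_left, real_inner_self_eq_norm_sq, hl]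
      field_simp
      ring
    have hyd : y = yp + l • xb := by rw [hyp]; abel
    have hyyp : ⟪y, yp⟫ = ‖yp‖ ^ 2 := by
      rw [hyd, inner_add_left, real_inner_smul_left, real_inner_comm yp xb, hypxb,
        real_inner_self_eq_norm_sq]
      ring
    have key : ∀ s : ℝ, 0 < s → ‖yp‖ ^ 2 ≤ s * (-⟪y, xb⟫) := by
      intro s hs
      have hvin : ⟪-yp - s • xb, xb⟫ < 0 := by
        rw [inner_sub_left, inner_neg_left, hypxb, real_inner_smul_left, hxbsq]
        have : 0 < s * r ^ 2 := mul_pos hs (pow_pos hr 2)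
        linarith
      have := claimA _ hvin
      rw [inner_sub_right, inner_neg_right, real_inner_smul_right, hyyp] at this
      linarith
    have hyp0 : yp = 0 := by
      by_contra hne
      have hpos : 0 < ‖yp‖ ^ 2 := pow_pos (norm_pos_iff.mpr hne) 2
      rcases eq_or_lt_of_le hyxble with heq | hlt
      · have h1 := key 1 one_pos
        rw [heq] at h1
        simp at h1
        exact hne h1
      · have hc : 0 < -⟪y, xb⟫ := by linarith
        have := key (‖yp‖ ^ 2 / (2 * (-⟪y, xb⟫))) (by positivity)
        have hb : ‖yp‖ ^ 2 / (2 * (-⟪y, xb⟫)) * (2 * (-⟪y, xb⟫)) = ‖yp‖ ^ 2 :=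
          div_mul_cancel₀ _ (by positivity)
        nlinarith [this, hb, hpos]
    exact sub_eq_zero.mp hyp0
  · rintro ⟨hyeq, hyle⟩
    intro ε hε
    refine ⟨1, one_pos, fun u hune hlt => ?_⟩
    have hPu : ‖P u‖ ≤ r := by
      have := (hP u).1
      rwa [mem_closedBall, dist_zero_right] at this
    have hinner : ⟪xb, P u - xb⟫ ≤ 0 := by
      rw [inner_sub_right, hxbsq]
      have := real_inner_le_norm xb (P u)
      nlinarith [hx]
    have hnum : 0 ≤ ⟪y, P u - P xb⟫ := by
      rw [hPxb, hyeq, real_inner_smul_left]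
      have hlneg : ⟪y, xb⟫ / ‖xb‖ ^ 2 ≤ 0 := by
        apply div_nonpos_of_nonpos_of_nonneg hyle (by positivity)
      nlinarith [hlneg, hinner]
    have hden : 0 < ‖u - xb‖ := by
      rw [norm_pos_iff]; exact sub_ne_zero_of_ne hune
    have : (⟪(0:H), u - xb⟫ - ⟪y, P u - P xb⟫) / ‖u - xb‖ ≤ 0 := by
      apply div_nonpos_of_nonpos_of_nonneg
      · rw [inner_zero_left]; linarith
      · exact le_of_lt hden
    linarith
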